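/- Let a < 0, b ≠ 0, H > 1/2, x ≠ 0, and X_t = x·exp{at - (1/2)b²t^{2H} + bB^H_t}. Then for every p > 1, E[|X_t|^p] → +∞ as t → +∞; in particular, adding the bilinear fractional noise destabilizes the p-th moment even though the unperturbed equation (b = 0) satisfies |x e^{at}|^p → 0. -/

import Mathlib

open MeasureTheory ProbabilityTheory Real Filter
open scoped NNReal ENNReal

/-- Real version of the quadratic Gaussian integral. -/
lemma integral_rexp_quadratic' {b : ℝ} (hb : b < 0) (c : ℝ) :
    ∫ x : ℝ, Real.exp (b * x ^ 2 + c * x) = Real.sqrt (π / -b) * Real.exp (-c ^ 2 / (4 * b)) := by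
  have hbc : (b : ℂ).re < 0 := by simpa using hb
  have h := integral_cexp_quadratic hbc (c : ℂ) 0
  have hL : (↑(∫ x : ℝ, Real.exp (b * x ^ 2 + c * x)) : ℂ)
      = ∫ x : ℝ, Complex.exp ((b : ℂ) * (x : ℂ) ^ 2 + (c : ℂ) * (x : ℂ) + 0) := by
    calc (↑(∫ x : ℝ, Real.exp (b * x ^ 2 + c * x)) : ℂ)
        = ∫ x : ℝ, ((Real.exp (b * x ^ 2 + c * x) : ℝ) : ℂ) := (integral_ofReal (𝕜 := ℂ)).symm
      _ = ∫ x : ℝ, Complex.exp ((b : ℂ) * (x : ℂ) ^ 2 + (c : ℂ) * (x : ℂ) + 0) := by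
          congr 1
          ext x
          rw [Complex.ofReal_exp]
          congr 1
          push_cast
          ring
  have hπb : (0 : ℝ) ≤ π / -b := div_nonneg Real.pi_pos.le (by linarith)
  have hR : ((π : ℂ) / -(b : ℂ)) ^ (1 / 2 : ℂ) * Complex.exp (0 - (c : ℂ) ^ 2 / (4 * (b : ℂ)))
      = ((Real.sqrt (π / -b) * Real.exp (-c ^ 2 / (4 * b)) : ℝ) : ℂ) := by
    have h1 : ((π : ℂ) / -(b : ℂ)) = ((π / -b : ℝ) : ℂ) := by push_cast; ring
    have h2 : (1 / 2 : ℂ) = (((1 / 2 : ℝ) : ℝ) : ℂ) := by norm_num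
    rw [h1, h2, ← Complex.ofReal_cpow hπb, ← Real.sqrt_eq_rpow,
      Complex.ofReal_mul, Complex.ofReal_exp]
    congr 1
    push_cast
    ring
  have := hL.trans (h.trans hR)
  exact_mod_cast this

/-- Moment generating function of a centered real Gaussian. -/
lemma integral_exp_gaussianReal {v : ℝ≥0} (hv : v ≠ 0) (c : ℝ) :
    ∫ y : ℝ, Real.exp (c * y) ∂(gaussianReal 0 v) = Real.exp ((v : ℝ) * c ^ 2 / 2) := by
  have hv0 : (0 : ℝ) < (v : ℝ) := by positivity
  rw [gaussianReal_of_var_ne_zero 0 hv]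
  have hpdf : gaussianPDF 0 v = fun x => ((Real.toNNReal (gaussianPDFReal 0 v x) : ℝ≥0) : ℝ≥0∞) :=
    rfl
  rw [hpdf, integral_withDensity_eq_integral_smul
      ((measurable_gaussianPDFReal 0 v).real_toNNReal) _]
  have heq : ∀ x : ℝ, (Real.toNNReal (gaussianPDFReal 0 v x) : ℝ≥0) • Real.exp (c * x)
      = (Real.sqrt (2 * π * v))⁻¹ * Real.exp ((-(1 / (2 * (v : ℝ)))) * x ^ 2 + c * x) := by
    intro x
    rw [NNReal.smul_def, smul_eq_mul, Real.coe_toNNReal _ (gaussianPDFReal_nonneg 0 v x),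
      gaussianPDFReal]
    rw [mul_assoc, ← Real.exp_add]
    congr 2
    field_simp
    ring
  simp_rw [heq]
  rw [integral_const_mul, integral_rexp_quadratic' (neg_lt_zero.mpr (by positivity : (0:ℝ) < 1 / (2 * (v : ℝ)))) c]
  have h1 : π / -(-(1 / (2 * (v : ℝ)))) = 2 * π * v := by
    field_simp
  rw [h1]
  have h2 : Real.sqrt (2 * π * (v : ℝ)) ≠ 0 := by positivity
  rw [← mul_assoc, inv_mul_cancel₀ h2, one_mul]
  congr 1
  field_simp
  ring

/-- For `a < 0`, `b ≠ 0`, `H > 1/2`, the `p`-th moment of the geometric fBm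
`X t = x * exp (a t - b² t^(2H)/2 + b B t)` blows up as `t → ∞` for every `p > 1`,
while the unperturbed solution `x e^{a t}` satisfies `|x e^{a t}|^p → 0`. -/
theorem geometric_fbm_moment_destabilization
    {Ω : Type*} [MeasurableSpace Ω] (P : Measure Ω) [IsProbabilityMeasure P]
    (H : ℝ) (hH : H ∈ Set.Ioo (1 / 2 : ℝ) 1)
    (a b x : ℝ) (ha : a < 0) (hb : b ≠ 0) (hx : x ≠ 0)
    (B : ℝ → Ω → ℝ)
    (hB0 : ∀ ω, B 0 ω = 0)
    (hGauss : ∀ t : ℝ, 0 ≤ t →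
      Measure.map (B t) P = gaussianReal 0 (Real.toNNReal (t ^ (2 * H))))
    (X : ℝ → Ω → ℝ)
    (hX : ∀ t ω, X t ω
      = x * Real.exp (a * t - (1 / 2) * b ^ 2 * t ^ (2 * H) + b * B t ω)) :
    ∀ p : ℝ, 1 < p →
      Tendsto (fun t : ℝ => ∫ ω, |X t ω| ^ p ∂P) atTop atTop
        ∧ Tendsto (fun t : ℝ => |x * Real.exp (a * t)| ^ p) atTop (nhds 0) := by
  intro p hp
  have hp0 : 0 < p := lt_trans one_pos hp
  have hxpos : 0 < |x| ^ p := Real.rpow_pos_of_pos (abs_pos.mpr hx) p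
  constructor
  · -- blow-up of the p-th moment
    set c : ℝ := (p ^ 2 - p) * b ^ 2 / 2 with hc
    have hcpos : 0 < c := by
      have : 0 < p ^ 2 - p := by nlinarith
      have hb2 : 0 < b ^ 2 := by positivity
      positivity
    have key : ∀ t : ℝ, 1 ≤ t →
        ∫ ω, |X t ω| ^ p ∂P = |x| ^ p * Real.exp (p * a * t + c * t ^ (2 * H)) := by
      intro t ht
      have ht0 : (0 : ℝ) < t := lt_of_lt_of_le one_pos ht
      have hrpos : (0 : ℝ) < t ^ (2 * H) := Real.rpow_pos_of_pos ht0 _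
      have hvne : (Real.toNNReal (t ^ (2 * H))) ≠ 0 := by
        simp [Real.toNNReal_eq_zero, not_le, hrpos]
      have hBmeas : AEMeasurable (B t) P := by
        by_contra hcon
        have := Measure.map_of_not_aemeasurable (f := B t) (μ := P) hcon
        rw [hGauss t ht0.le] at this
        have h1 : (gaussianReal 0 (Real.toNNReal (t ^ (2 * H)))) Set.univ = 1 :=
          measure_univ
        rw [this] at h1
        simp at h1
      have h1 : ∀ ω, |X t ω| ^ p
          = (|x| ^ p * Real.exp (p * (a * t - (1 / 2) * b ^ 2 * t ^ (2 * H))))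
            * Real.exp ((p * b) * B t ω) := by
        intro ω
        rw [hX, abs_mul, abs_of_pos (Real.exp_pos _),
          Real.mul_rpow (abs_nonneg x) (Real.exp_pos _).le, ← Real.exp_mul]
        conv_rhs => rw [mul_assoc, ← Real.exp_add]
        congr 2
        ring
      calc ∫ ω, |X t ω| ^ p ∂P
          = ∫ ω, (|x| ^ p * Real.exp (p * (a * t - (1 / 2) * b ^ 2 * t ^ (2 * H))))
              * Real.exp ((p * b) * B t ω) ∂P := by simp_rw [h1]
        _ = (|x| ^ p * Real.exp (p * (a * t - (1 / 2) * b ^ 2 * t ^ (2 * H))))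
              * ∫ ω, Real.exp ((p * b) * B t ω) ∂P := integral_const_mul _ _
        _ = (|x| ^ p * Real.exp (p * (a * t - (1 / 2) * b ^ 2 * t ^ (2 * H))))
              * ∫ y : ℝ, Real.exp ((p * b) * y) ∂(Measure.map (B t) P) := by
            rw [integral_map hBmeas (Continuous.aestronglyMeasurable
              (by continuity : Continuous fun y : ℝ => Real.exp (p * b * y)))]
        _ = |x| ^ p * Real.exp (p * a * t + c * t ^ (2 * H)) := by
            rw [hGauss t ht0.le, integral_exp_gaussianReal hvne,
              Real.coe_toNNReal _ hrpos.le, mul_assoc, ← Real.exp_add]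
            congr 2
            ring
    have hE : Tendsto (fun t : ℝ => p * a * t + c * t ^ (2 * H)) atTop atTop := by
      have h2H : 0 < 2 * H - 1 := by
        have := hH.1
        linarith
      have hfac : ∀ t : ℝ, 1 ≤ t →
          p * a * t + c * t ^ (2 * H) = t * (p * a + c * t ^ (2 * H - 1)) := by
        intro t ht
        have ht0 : (0 : ℝ) < t := lt_of_lt_of_le one_pos ht
        have h15 : t ^ ((1:ℝ) + (2 * H - 1)) = t * t ^ (2 * H - 1) := by
          rw [Real.rpow_add ht0, Real.rpow_one]
        rw [show (1:ℝ) + (2 * H - 1) = 2 * H by ring] at h15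
        rw [h15]
        ring
      have hmain : Tendsto (fun t : ℝ => t * (p * a + c * t ^ (2 * H - 1))) atTop atTop := by
        apply Tendsto.atTop_mul_atTop₀ tendsto_id
        exact tendsto_atTop_add_const_left _ _
          ((tendsto_rpow_atTop h2H).const_mul_atTop hcpos)
      refine hmain.congr' ?_
      filter_upwards [eventually_ge_atTop (1 : ℝ)] with t ht
      exact (hfac t ht).symm
    have hF : Tendsto (fun t : ℝ => |x| ^ p * Real.exp (p * a * t + c * t ^ (2 * H)))
        atTop atTop :=
      (Real.tendsto_exp_atTop.comp hE).const_mul_atTop hxpos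
    refine hF.congr' ?_
    filter_upwards [eventually_ge_atTop (1 : ℝ)] with t ht
    exact (key t ht).symm
  · -- decay of the unperturbed solution
    have heq : ∀ t : ℝ, |x * Real.exp (a * t)| ^ p = |x| ^ p * Real.exp (p * (a * t)) := by
      intro t
      rw [abs_mul, abs_of_pos (Real.exp_pos _),
        Real.mul_rpow (abs_nonneg x) (Real.exp_pos _).le, ← Real.exp_mul, mul_comm (a * t) p]
    simp_rw [heq]
    have hpa : p * a < 0 := mul_neg_of_pos_of_neg hp0 ha
    have h1 : Tendsto (fun t : ℝ => p * (a * t)) atTop atBot := by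
      have : Tendsto (fun t : ℝ => (p * a) * t) atTop atBot :=
        (tendsto_const_mul_atBot_of_neg hpa).mpr tendsto_id
      refine this.congr fun t => by ring
    have h2 : Tendsto (fun t : ℝ => Real.exp (p * (a * t))) atTop (nhds 0) :=
      Real.tendsto_exp_atBot.comp h1
    have := h2.const_mul (|x| ^ p)
    simpa using this
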